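/- Let 0 < m < n, let h ⊆ so(m) be a subalgebra (embedded in so(n) acting trivially on the last n−m coordinates), and let ψ : h → ℝ^{n−m} be a linear map vanishing on the commutant [h,h]. Then g^{4,h,m,ψ} = {(0, A, X + ψ(A)) : A ∈ h, X ∈ ℝᵐ} is a Lie subalgebra of so(1,n+1)_{ℝp}, where ℝᵐ and ℝ^{n−m} are the spans of e_1,...,e_m and e_{m+1},...,e_n respectively. -/

import Mathlib

open Matrix

attribute [local instance 100] LieRing.ofAssociativeRing

/-- Index type for `ℝ^{1,n+1}` with basis `p, e_1, …, e_n, q`. -/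
abbrev Idx (n : ℕ) := Fin 1 ⊕ (Fin n ⊕ Fin 1)

/-- The Gram matrix `[[0,0,1],[0,E_n,0],[1,0,0]]` of the Minkowski form `η`. -/
noncomputable def eta (n : ℕ) : Matrix (Idx n) (Idx n) ℝ :=
  Matrix.fromBlocks 0 (Matrix.of fun _ j => Sum.elim (fun _ => (0 : ℝ)) (fun _ => 1) j)
    (Matrix.of fun i _ => Sum.elim (fun _ => (0 : ℝ)) (fun _ => 1) i)
    (Matrix.fromBlocks 1 0 0 0)

/-- The matrix `[[a, X, 0], [0, A, -Xᵀ], [0, 0, -a]]` associated to the triple `(a, A, X)`. -/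
noncomputable def toMat {n : ℕ} (a : ℝ) (A : Matrix (Fin n) (Fin n) ℝ) (X : Fin n → ℝ) :
    Matrix (Idx n) (Idx n) ℝ :=
  Matrix.fromBlocks (Matrix.of fun _ _ => a)
    (Matrix.of fun _ j => Sum.elim X (fun _ => (0 : ℝ)) j)
    0
    (Matrix.fromBlocks A (Matrix.of fun i _ => -X i) 0 (Matrix.of fun _ _ => -a))

/-- The first basis vector `p`. -/
noncomputable def pvec (n : ℕ) : Idx n → ℝ := Pi.single (Sum.inl 0) 1

/-- `so(1,n+1)`: matrices skew-symmetric with respect to `η`. -/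
noncomputable def soEta (n : ℕ) : Set (Matrix (Idx n) (Idx n) ℝ) :=
  {M | Mᵀ * eta n + eta n * M = 0}

/-- `so(1,n+1)_{ℝp}`: elements of `so(1,n+1)` preserving the isotropic line `ℝ p`. -/
noncomputable def stab (n : ℕ) : Set (Matrix (Idx n) (Idx n) ℝ) :=
  {M | M ∈ soEta n ∧ M.mulVec (pvec n) ∈ Submodule.span ℝ {pvec n}}

/-- `so(n)` as a Lie subalgebra of the matrix Lie algebra. -/
noncomputable def son (n : ℕ) : LieSubalgebra ℝ (Matrix (Fin n) (Fin n) ℝ) :=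
  skewAdjointMatricesLieSubalgebra (1 : Matrix (Fin n) (Fin n) ℝ)

section Aux

variable {n : ℕ}

lemma toMat_zero : toMat (n := n) 0 0 0 = 0 := by
  ext i j
  rcases i with i | i | i <;> rcases j with j | j | j <;> simp [toMat]

lemma toMat_add (A B : Matrix (Fin n) (Fin n) ℝ) (Z W : Fin n → ℝ) :
    toMat 0 A Z + toMat 0 B W = toMat 0 (A + B) (Z + W) := by
  ext i j
  rcases i with i | i | i <;> rcases j with j | j | j <;> simp [toMat] <;> ring

lemma toMat_smul (c : ℝ) (A : Matrix (Fin n) (Fin n) ℝ) (Z : Fin n → ℝ) :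
    c • toMat 0 A Z = toMat 0 (c • A) (c • Z) := by
  ext i j
  rcases i with i | i | i <;> rcases j with j | j | j <;> simp [toMat]

lemma toMat_bracket (A B : Matrix (Fin n) (Fin n) ℝ) (hA : Aᵀ = -A) (hB : Bᵀ = -B)
    (Z W : Fin n → ℝ) :
    ⁅toMat 0 A Z, toMat 0 B W⁆ = toMat 0 ⁅A, B⁆ (A *ᵥ W - B *ᵥ Z) := by
  have hA' : ∀ i j, A j i = -A i j := fun i j => by
    have := congrFun (congrFun hA i) j; simpa using this
  have hB' : ∀ i j, B j i = -B i j := fun i j => by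
    have := congrFun (congrFun hB i) j; simpa using this
  rw [Ring.lie_def]
  ext i j
  rcases i with i | i | i <;> rcases j with j | j | j <;>
    simp only [toMat, Matrix.sub_apply, Matrix.mul_apply, Matrix.fromBlocks_apply₁₁,
      Matrix.fromBlocks_apply₁₂, Matrix.fromBlocks_apply₂₁, Matrix.fromBlocks_apply₂₂,
      Matrix.of_apply, Sum.elim_inl, Sum.elim_inr, Fintype.sum_sum_type,
      Matrix.zero_apply, Ring.lie_def, Matrix.sub_apply, mulVec, dotProduct,
      Pi.sub_apply, Finset.univ_unique, Finset.sum_const, Finset.sum_sub_distrib,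
      mul_zero, zero_mul, add_zero, zero_add, sub_zero, zero_sub, neg_neg, neg_zero,
      Finset.sum_singleton, smul_eq_mul, one_smul, sub_self, neg_sub] <;>
    try ring_nf
  case inl.inr.inl =>
    have e1 : ∀ (C : Matrix (Fin n) (Fin n) ℝ), (∀ i j, C j i = -C i j) →
        ∀ (V : Fin n → ℝ) (j : Fin n), ∑ x, V x * C x j = -∑ x, C j x * V x := by
      intro C hC V j
      rw [← Finset.sum_neg_distrib]
      exact Finset.sum_congr rfl fun x _ => by rw [hC j x]; ring
    rw [e1 B hB', e1 A hA']; ring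
  case inl.inr.inr => simp [mul_comm]
  case inr.inl.inr.inr => simp [Finset.sum_neg_distrib]; ring

lemma toMat_mem_stab (A : Matrix (Fin n) (Fin n) ℝ) (hA : Aᵀ = -A) (Z : Fin n → ℝ) :
    toMat 0 A Z ∈ stab n := by
  have hA' : ∀ i j, A j i = -A i j := fun i j => by
    have := congrFun (congrFun hA i) j; simpa using this
  constructor
  · show _ = _
    ext i j
    rcases i with i | i | i <;> rcases j with j | j | j <;>
      simp [toMat, eta, Matrix.mul_apply, Fintype.sum_sum_type, Matrix.one_apply]
    all_goals (try rw [hA']); try ring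
  · have : (toMat 0 A Z).mulVec (pvec n) = 0 := by
      ext i
      rcases i with i | i | i <;>
        simp [toMat, pvec, mulVec, dotProduct, Fintype.sum_sum_type, Pi.single_apply]
    rw [this]; exact Submodule.zero_mem _

end Aux

/-- For `0 < m < n`, a subalgebra `h ⊆ so(m) ⊆ so(n)` acting trivially on the last `n-m`
coordinates, and a linear `ψ : h → ℝ^{n-m}` vanishing on the commutant,
`g^{4,h,m,ψ} = {(0, A, X + ψ(A)) : A ∈ h, X ∈ ℝᵐ}` is a Lie subalgebra of `so(1,n+1)_{ℝp}`. -/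
theorem stmt5 (n m : ℕ) (hm0 : 0 < m) (hmn : m < n)
    (h : LieSubalgebra ℝ (Matrix (Fin n) (Fin n) ℝ)) (hh : h ≤ son n)
    (hblock : ∀ A ∈ h, ∀ i j : Fin n, m ≤ (i : ℕ) ∨ m ≤ (j : ℕ) → A i j = 0)
    (ψ : h →ₗ[ℝ] (Fin n → ℝ))
    (hψsupp : ∀ (A : h) (i : Fin n), (i : ℕ) < m → ψ A i = 0)
    (hψ : ∀ A B : h, ψ ⁅A, B⁆ = 0) :
    ∃ L : LieSubalgebra ℝ (Matrix (Idx n) (Idx n) ℝ),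
      (L : Set (Matrix (Idx n) (Idx n) ℝ)) =
        {M | ∃ (A : h) (X : Fin n → ℝ), (∀ i : Fin n, m ≤ (i : ℕ) → X i = 0) ∧
          M = toMat 0 (A : Matrix (Fin n) (Fin n) ℝ) (X + ψ A)} ∧
      (L : Set (Matrix (Idx n) (Idx n) ℝ)) ⊆ stab n := by
  have skew : ∀ A : h, (A : Matrix (Fin n) (Fin n) ℝ)ᵀ = -(A : Matrix (Fin n) (Fin n) ℝ) := by
    intro A
    have := hh A.2
    rw [son, mem_skewAdjointMatricesLieSubalgebra, mem_skewAdjointMatricesSubmodule] at this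
    simpa [Matrix.IsSkewAdjoint, Matrix.IsAdjointPair] using this
  have hAψ : ∀ C D : h, (C : Matrix (Fin n) (Fin n) ℝ) *ᵥ (ψ D) = 0 := by
    intro C D
    funext i
    show ∑ j, (C : Matrix (Fin n) (Fin n) ℝ) i j * ψ D j = 0
    refine Finset.sum_eq_zero fun j _ => ?_
    rcases lt_or_ge (j : ℕ) m with hj | hj
    · rw [hψsupp D j hj, mul_zero]
    · rw [hblock _ C.2 i j (Or.inr hj), zero_mul]
  let S : Set (Matrix (Idx n) (Idx n) ℝ) :=
    {M | ∃ (A : h) (X : Fin n → ℝ), (∀ i : Fin n, m ≤ (i : ℕ) → X i = 0) ∧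
      M = toMat 0 (A : Matrix (Fin n) (Fin n) ℝ) (X + ψ A)}
  refine ⟨{ carrier := S
            zero_mem' := ?_
            add_mem' := ?_
            smul_mem' := ?_
            lie_mem' := ?_ }, rfl, ?_⟩
  · -- add_mem'
    rintro M N ⟨A, X, hX, rfl⟩ ⟨B, Y, hY, rfl⟩
    refine ⟨A + B, X + Y, fun i hi => by simp [hX i hi, hY i hi], ?_⟩
    rw [toMat_add]
    have h1 : ((A + B : h) : Matrix (Fin n) (Fin n) ℝ) =
        (A : Matrix (Fin n) (Fin n) ℝ) + B := rfl
    rw [h1, map_add]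
    congr 1
    abel
  · -- zero_mem'
    exact ⟨0, 0, fun i _ => rfl, by simp [toMat_zero]⟩
  · -- smul_mem'
    rintro c M ⟨A, X, hX, rfl⟩
    refine ⟨c • A, c • X, fun i hi => by simp [hX i hi], ?_⟩
    rw [toMat_smul]
    have h1 : ((c • A : h) : Matrix (Fin n) (Fin n) ℝ) =
        c • (A : Matrix (Fin n) (Fin n) ℝ) := rfl
    rw [h1, _root_.map_smul, smul_add]
  · -- lie_mem'
    rintro M N ⟨A, X, hX, rfl⟩ ⟨B, Y, hY, rfl⟩
    refine ⟨⁅A, B⁆, (A : Matrix (Fin n) (Fin n) ℝ) *ᵥ Y - (B : Matrix (Fin n) (Fin n) ℝ) *ᵥ X,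
      fun i hi => ?_, ?_⟩
    · have hAz : ((A : Matrix (Fin n) (Fin n) ℝ) *ᵥ Y) i = 0 := by
        show ∑ j, (A : Matrix (Fin n) (Fin n) ℝ) i j * Y j = 0
        refine Finset.sum_eq_zero fun j _ => ?_
        rw [hblock _ A.2 i j (Or.inl hi), zero_mul]
      have hBz : ((B : Matrix (Fin n) (Fin n) ℝ) *ᵥ X) i = 0 := by
        show ∑ j, (B : Matrix (Fin n) (Fin n) ℝ) i j * X j = 0
        refine Finset.sum_eq_zero fun j _ => ?_
        rw [hblock _ B.2 i j (Or.inl hi), zero_mul]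
      simp [hAz, hBz]
    · have hco : ((⁅A, B⁆ : h) : Matrix (Fin n) (Fin n) ℝ) =
          ⁅(A : Matrix (Fin n) (Fin n) ℝ), (B : Matrix (Fin n) (Fin n) ℝ)⁆ := rfl
      rw [toMat_bracket _ _ (skew A) (skew B), hψ A B, hco]
      congr 1
      rw [Matrix.mulVec_add, Matrix.mulVec_add, hAψ A B, hAψ B A]
      abel
  · rintro M ⟨A, X, hX, rfl⟩
    exact toMat_mem_stab _ (skew A) _
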